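/- Let r be a positive even integer. If A and B are independent random variables with the arcsine distribution on (−1,1), then E[(Σ_{i=0}^{r−1} A^{r−1−i}B^i)² (1−AB)] ≤ (2r/4^{r−1}) · binom(2r−2, r−1). -/

import Mathlib

open MeasureTheory intervalIntegral Set Finset



noncomputable def mu (j : ℕ) : ℝ := (Nat.choose (2*j) j : ℝ) / 4 ^ j

lemma mu_zero : mu 0 = 1 := by simp [mu]

lemma mu_nonneg (j : ℕ) : 0 ≤ mu j := by
  apply div_nonneg (by positivity) (by positivity)

lemma mu_rec (j : ℕ) : (2*j+2 : ℝ) * mu (j+1) = (2*j+1) * mu j := by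
  have h := Nat.succ_mul_centralBinom_succ j
  simp only [Nat.centralBinom] at h
  have h' : ((j:ℝ)+1) * ((2*(j+1)).choose (j+1) : ℝ) = 2 * (2*(j:ℝ)+1) * ((2*j).choose j : ℝ) := by
    exact_mod_cast congrArg (Nat.cast : ℕ → ℝ) h
  simp only [mu]
  have h4 : (4:ℝ)^(j+1) = 4 * 4^j := by ring
  push_cast
  field_simp [h4]
  linear_combination (2 * (4:ℝ)^j) * h'

lemma mu_succ_le (j : ℕ) : mu (j+1) ≤ mu j := by
  have h := mu_rec j
  have hn := mu_nonneg (j+1)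
  nlinarith

lemma mu_le_one (j : ℕ) : mu j ≤ 1 := by
  induction j with
  | zero => simp [mu_zero]
  | succ n ih => exact (mu_succ_le n).trans ih

lemma mu_mul_le (a b : ℕ) : mu a * mu b ≤ mu (a+b) := by
  induction b with
  | zero => simp [mu_zero]
  | succ n ih =>
    have h1 := mu_rec n
    have h2 := mu_rec (a+n)
    have hihm : (2*(n:ℝ)+1) * (mu a * mu n) ≤ (2*(n:ℝ)+1) * mu (a+n) :=
      mul_le_mul_of_nonneg_left ih (by positivity)
    have hn1 := mu_nonneg (a+n)
    have hn4 := mu_nonneg (n+1)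
    have ha : (0:ℝ) ≤ (a:ℝ) := Nat.cast_nonneg a
    have hkey : mu a * mu (n+1) * ((2*(n:ℝ)+2) * (2*((a:ℝ)+n)+2)) ≤
        mu (a+(n+1)) * ((2*(n:ℝ)+2) * (2*((a:ℝ)+n)+2)) := by
      have e1 : mu a * mu (n+1) * ((2*(n:ℝ)+2) * (2*((a:ℝ)+n)+2)) =
          ((2*(n:ℝ)+2) * mu (n+1)) * mu a * (2*((a:ℝ)+n)+2) := by ring
      have e2 : (a+(n+1)) = ((a+n)+1) := by omega
      have e3 : mu (a+(n+1)) * ((2*(n:ℝ)+2) * (2*((a:ℝ)+n)+2)) =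
          ((2*((a:ℝ)+n)+2) * mu ((a+n)+1)) * (2*(n:ℝ)+2) := by rw [e2]; ring
      rw [e1, e3, h1]
      rw [show ((2:ℝ)*((a:ℝ)+n)+2) * mu ((a+n)+1) = (2*((a:ℝ)+(n:ℝ))+2) * mu ((a+n)+1) by norm_num]
      rw [show ((2:ℝ)*((a:ℝ)+(n:ℝ))+2) * mu ((a+n)+1) = (2*((a+n):ℕ)+2 : ℝ) * mu ((a+n)+1) by push_cast; ring]
      rw [h2]
      push_cast
      nlinarith [hihm]
    have hpos : (0:ℝ) < (2*(n:ℝ)+2) * (2*((a:ℝ)+n)+2) := by positivity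
    exact le_of_mul_le_mul_right hkey hpos



noncomputable def w (x : ℝ) : ℝ := Real.sqrt (1 - x^2)

lemma w_nonneg (x : ℝ) : 0 ≤ w x := Real.sqrt_nonneg _

lemma w_pos {x : ℝ} (h1 : -1 < x) (h2 : x < 1) : 0 < w x :=
  Real.sqrt_pos.mpr (by nlinarith)

lemma w_sq {x : ℝ} (h1 : -1 ≤ x) (h2 : x ≤ 1) : w x ^ 2 = 1 - x^2 :=
  Real.sq_sqrt (by nlinarith)

lemma dom_integrable : IntervalIntegrable
    (fun x : ℝ => (1-x) ^ (-(1/2) : ℝ) + (1+x) ^ (-(1/2) : ℝ)) volume (-1) 1 := by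
  have h1 : IntervalIntegrable (fun x : ℝ => x ^ (-(1/2) : ℝ)) volume 0 2 :=
    intervalIntegral.intervalIntegrable_rpow' (by norm_num)
  have h2 : IntervalIntegrable (fun x : ℝ => (1-x) ^ (-(1/2) : ℝ)) volume (-1) 1 := by
    have := (h1.comp_sub_left 1).symm
    norm_num at this
    exact this
  have h3 : IntervalIntegrable (fun x : ℝ => (1+x) ^ (-(1/2) : ℝ)) volume (-1) 1 := by
    have := h1.comp_add_left 1
    norm_num at this
    exact this
  exact h2.add h3

lemma inv_w_le (x : ℝ) (hx : x ∈ Set.uIoc (-1 : ℝ) 1) :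
    |1 / w x| ≤ |(1-x) ^ (-(1/2) : ℝ) + (1+x) ^ (-(1/2) : ℝ)| := by
  rw [Set.uIoc_of_le (by norm_num : (-1:ℝ) ≤ 1)] at hx
  obtain ⟨hx1, hx2⟩ := hx
  have hp : (0:ℝ) ≤ 1 - x := by linarith
  have hq : (0:ℝ) < 1 + x := by linarith
  have hrw1 : (1-x) ^ (-(1/2) : ℝ) = 1 / Real.sqrt (1-x) := by
    rw [Real.rpow_neg hp, ← Real.sqrt_eq_rpow, one_div]
  have hrw2 : (1+x) ^ (-(1/2) : ℝ) = 1 / Real.sqrt (1+x) := by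
    rw [Real.rpow_neg hq.le, ← Real.sqrt_eq_rpow, one_div]
  have hw : w x = Real.sqrt (1-x) * Real.sqrt (1+x) := by
    rw [w, ← Real.sqrt_mul hp]; ring_nf
  rw [hrw1, hrw2, hw]
  have sp := Real.sqrt_nonneg (1-x)
  have sq' := Real.sqrt_pos.mpr hq
  rcases eq_or_lt_of_le sp with h0 | hsp
  · rw [← h0, zero_mul, div_zero, abs_zero]
    exact abs_nonneg _
  · have h2 : Real.sqrt (1-x)^2 + Real.sqrt (1+x)^2 = 2 := by
      rw [Real.sq_sqrt hp, Real.sq_sqrt hq.le]; ring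
    have hsum : Real.sqrt (1-x) + Real.sqrt (1+x) ≥ 1 := by
      nlinarith [sp, sq'.le]
    rw [abs_of_nonneg (by positivity), abs_of_nonneg (by positivity)]
    rw [div_add_div _ _ (ne_of_gt hsp) (ne_of_gt sq'), one_div, inv_eq_one_div,
      div_le_div_iff₀ (by positivity) (by positivity)]
    nlinarith [mul_pos hsp sq']

lemma pow_div_w_integrable (n : ℕ) :
    IntervalIntegrable (fun x : ℝ => x ^ n / (Real.pi * w x)) volume (-1) 1 := by
  apply IntervalIntegrable.mono_fun dom_integrable
  · apply Measurable.aestronglyMeasurable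
    apply Measurable.div (by fun_prop)
    apply Measurable.mul measurable_const
    exact (continuous_const.sub (continuous_pow 2)).sqrt.measurable
  · refine (ae_restrict_iff' measurableSet_uIoc).mpr (Filter.Eventually.of_forall fun x hx => ?_)
    have hx' := hx
    rw [Set.uIoc_of_le (by norm_num : (-1:ℝ) ≤ 1)] at hx'
    have hxn : |x ^ n| ≤ 1 := by
      rw [abs_pow]
      exact pow_le_one₀ (abs_nonneg x) (abs_le.mpr ⟨hx'.1.le, hx'.2⟩)
    have hπ : (1:ℝ) ≤ Real.pi := by linarith [Real.pi_gt_three]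
    have step : |x ^ n / (Real.pi * w x)| ≤ |1 / w x| := by
      rcases eq_or_lt_of_le (w_nonneg x) with h0 | hw
      · rw [← h0, mul_zero, div_zero, div_zero, abs_zero]
      · rw [abs_div, abs_of_nonneg (by positivity : (0:ℝ) ≤ Real.pi * w x),
          abs_of_nonneg (by positivity : (0:ℝ) ≤ 1 / w x),
          div_le_div_iff₀ (by positivity) hw]
        nlinarith
    calc ‖x ^ n / (Real.pi * w x)‖ = |x ^ n / (Real.pi * w x)| := Real.norm_eq_abs _
      _ ≤ |1 / w x| := step
      _ = ‖1 / w x‖ := (Real.norm_eq_abs _).symm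
      _ ≤ ‖(1-x) ^ (-(1/2) : ℝ) + (1+x) ^ (-(1/2) : ℝ)‖ := by
          rw [Real.norm_eq_abs, Real.norm_eq_abs]; exact inv_w_le x hx


noncomputable def mm (n : ℕ) : ℝ := ∫ x in (-1:ℝ)..1, x ^ n / (Real.pi * w x)

lemma w_deriv {x : ℝ} (h1 : -1 < x) (h2 : x < 1) : HasDerivAt w (-x / w x) x := by
  have hne : (1 - x^2) ≠ 0 := by nlinarith
  have hinner : HasDerivAt (fun y : ℝ => 1 - y^2) (-(2*x)) x := by
    simpa using (hasDerivAt_pow 2 x).const_sub 1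
  have h := (Real.hasDerivAt_sqrt hne).comp x hinner
  refine (h : HasDerivAt w _ x).congr_deriv ?_
  have hwne : w x ≠ 0 := ne_of_gt (w_pos h1 h2)
  simp only [w] at hwne ⊢
  field_simp

lemma mm_odd (k : ℕ) : mm (2*k+1) = 0 := by
  set f : ℝ → ℝ := fun x => x ^ (2*k+1) / (Real.pi * w x) with hf
  have h1 : (∫ x in (-1:ℝ)..1, f (-x)) = ∫ x in (-1:ℝ)..1, f x := by
    simpa using intervalIntegral.integral_comp_neg f (a := -1) (b := 1)
  have h2 : (fun x : ℝ => f (-x)) = fun x => -(f x) := by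
    funext x
    simp only [hf, w]
    rw [show (-x)^2 = x^2 by ring, Odd.neg_pow ⟨k, by ring⟩, neg_div]
  rw [h2, intervalIntegral.integral_neg] at h1
  have : (2:ℝ) * ∫ x in (-1:ℝ)..1, f x = 0 := by linarith
  have := mul_eq_zero.mp this
  simpa [mm, hf] using this.resolve_left (by norm_num)

lemma mm_zero : mm 0 = 1 := by
  have hd : ∀ x ∈ Ioo (-1:ℝ) 1, HasDerivWithinAt (fun y => Real.arcsin y / Real.pi)
      ((fun y : ℝ => y ^ 0 / (Real.pi * w y)) x) (Ioi x) x := by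
    intro x hx
    have h := (Real.hasDerivAt_arcsin (ne_of_gt hx.1) (ne_of_lt hx.2)).div_const Real.pi
    have e : (1 / Real.sqrt (1 - x^2)) / Real.pi = x ^ 0 / (Real.pi * w x) := by
      rw [pow_zero, w, div_div, mul_comm]
    rw [e] at h
    exact h.hasDerivWithinAt
  have := intervalIntegral.integral_eq_sub_of_hasDeriv_right_of_le (by norm_num : (-1:ℝ) ≤ 1)
    (Real.continuous_arcsin.div_const Real.pi).continuousOn hd (pow_div_w_integrable 0)
  rw [mm, this, Real.arcsin_one, Real.arcsin_neg_one]
  field_simp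
  ring

lemma mm_rec (n : ℕ) : ((n:ℝ)+2) * mm (n+2) = ((n:ℝ)+1) * mm n := by
  set f' : ℝ → ℝ := fun x => ((n:ℝ)+2) * (x^(n+2) / (Real.pi * w x)) - ((n:ℝ)+1) * (x^n / (Real.pi * w x)) with hf'
  have hint : IntervalIntegrable f' volume (-1) 1 :=
    ((pow_div_w_integrable (n+2)).const_mul _).sub ((pow_div_w_integrable n).const_mul _)
  set F : ℝ → ℝ := fun x => -(x^(n+1) * w x) / Real.pi with hF
  have hd : ∀ x ∈ Ioo (-1:ℝ) 1, HasDerivWithinAt F (f' x) (Ioi x) x := by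
    intro x hx
    have hwd := w_deriv hx.1 hx.2
    have h := (((hasDerivAt_pow (n+1) x).mul hwd).neg).div_const Real.pi
    have hwne : w x ≠ 0 := ne_of_gt (w_pos hx.1 hx.2)
    have hsq : w x ^ 2 = 1 - x^2 := w_sq hx.1.le hx.2.le
    have heq : -(((n:ℝ)+1) * x ^ n * w x + x ^ (n+1) * (-x / w x)) / Real.pi = f' x := by
      rw [hf']
      have hπ : Real.pi ≠ 0 := Real.pi_ne_zero
      field_simp
      linear_combination (-(((n:ℝ)+1) * x^n)) * hsq
    rw [← heq]
    have : HasDerivAt F (-((↑(n+1) * x ^ (n + 1 - 1) * w x + x ^ (n+1) * (-x / w x))) / Real.pi) x := h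
    simpa using this.hasDerivWithinAt
  have hcont : ContinuousOn F (Icc (-1:ℝ) 1) := by
    apply Continuous.continuousOn
    apply Continuous.div_const
    apply Continuous.neg
    exact (continuous_pow (n+1)).mul ((continuous_const.sub (continuous_pow 2)).sqrt)
  have key := intervalIntegral.integral_eq_sub_of_hasDeriv_right_of_le
    (by norm_num : (-1:ℝ) ≤ 1) hcont hd hint
  have hF1 : F 1 = 0 := by simp [hF, w]
  have hFm1 : F (-1) = 0 := by
    simp [hF, w]
  rw [hF1, hFm1, sub_zero] at key
  have hsplit : (∫ x in (-1:ℝ)..1, f' x) = ((n:ℝ)+2) * mm (n+2) - ((n:ℝ)+1) * mm n := by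
    rw [hf']
    rw [intervalIntegral.integral_sub ((pow_div_w_integrable (n+2)).const_mul _)
      ((pow_div_w_integrable n).const_mul _),
      intervalIntegral.integral_const_mul, intervalIntegral.integral_const_mul]
    rfl
  rw [hsplit] at key
  linarith


lemma mm_even (k : ℕ) : mm (2*k) = mu k := by
  induction k with
  | zero => simpa [mu_zero] using mm_zero
  | succ n ih =>
    have h1 := mm_rec (2*n)
    have h2 := mu_rec n
    have he : 2*(n+1) = 2*n+2 := by ring
    rw [he]
    push_cast at h1 h2 ⊢
    have h3 : (2*(n:ℝ)+2) ≠ 0 := by positivity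
    have : (2*(n:ℝ)+2) * mm (2*n+2) = (2*(n:ℝ)+2) * mu (n+1) := by
      rw [h2]
      rw [ih] at h1
      linarith
    exact mul_left_cancel₀ h3 this


variable (r : ℕ)

lemma poly_expand (a b : ℝ) : (∑ i ∈ Finset.range r, a^(r-1-i)*b^i)^2 * (1-a*b)
    = ∑ p ∈ (Finset.range r) ×ˢ (Finset.range r),
        (a^((r-1-p.1)+(r-1-p.2)) * b^(p.1+p.2) - a^((r-1-p.1)+(r-1-p.2)+1) * b^(p.1+p.2+1)) := by
  rw [sq, Finset.sum_mul_sum]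
  rw [Finset.sum_product' (f := fun k l =>
    (a^((r-1-k)+(r-1-l)) * b^(k+l) - a^((r-1-k)+(r-1-l)+1) * b^(k+l+1)))]
  rw [Finset.sum_mul]
  apply Finset.sum_congr rfl
  intro k _
  rw [Finset.sum_mul]
  apply Finset.sum_congr rfl
  intro l _
  rw [pow_add a, pow_add b, pow_add a ((r-1-k)+(r-1-l)) 1, pow_add b (k+l) 1]
  ring

lemma inner_integral (a : ℝ) :
    (∫ b in (-1:ℝ)..1, ((∑ i ∈ Finset.range r, a^(r-1-i)*b^i)^2 * (1-a*b))
        / (Real.pi * Real.sqrt (1-a^2)) / (Real.pi * Real.sqrt (1-b^2)))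
    = (∑ p ∈ (Finset.range r) ×ˢ (Finset.range r),
        (a^((r-1-p.1)+(r-1-p.2)) * mm (p.1+p.2) - a^((r-1-p.1)+(r-1-p.2)+1) * mm (p.1+p.2+1)))
      / (Real.pi * Real.sqrt (1-a^2)) := by
  have step1 : ∀ b : ℝ, ((∑ i ∈ Finset.range r, a^(r-1-i)*b^i)^2 * (1-a*b))
        / (Real.pi * Real.sqrt (1-a^2)) / (Real.pi * Real.sqrt (1-b^2))
      = (∑ p ∈ (Finset.range r) ×ˢ (Finset.range r),
          (a^((r-1-p.1)+(r-1-p.2)) * (b^(p.1+p.2) / (Real.pi * w b))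
            - a^((r-1-p.1)+(r-1-p.2)+1) * (b^(p.1+p.2+1) / (Real.pi * w b))))
        / (Real.pi * Real.sqrt (1-a^2)) := by
    intro b
    rw [div_right_comm]
    congr 1
    rw [poly_expand r a b, Finset.sum_div]
    apply Finset.sum_congr rfl
    intro p _
    rw [show Real.sqrt (1-b^2) = w b from rfl, sub_div, mul_div_assoc, mul_div_assoc]
  simp_rw [step1]
  rw [intervalIntegral.integral_div]
  congr 1
  rw [intervalIntegral.integral_finset_sum]
  · apply Finset.sum_congr rfl
    intro p _
    rw [intervalIntegral.integral_sub (((pow_div_w_integrable (p.1+p.2)).const_mul _))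
      (((pow_div_w_integrable (p.1+p.2+1)).const_mul _)),
      intervalIntegral.integral_const_mul, intervalIntegral.integral_const_mul]
    rfl
  · intro p _
    exact ((pow_div_w_integrable (p.1+p.2)).const_mul _).sub
      ((pow_div_w_integrable (p.1+p.2+1)).const_mul _)

lemma total_integral :
    (∫ a in (-1:ℝ)..1, ∫ b in (-1:ℝ)..1,
        ((∑ i ∈ Finset.range r, a ^ (r - 1 - i) * b ^ i) ^ 2 * (1 - a * b)) /
            (Real.pi * Real.sqrt (1 - a ^ 2)) / (Real.pi * Real.sqrt (1 - b ^ 2)))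
    = ∑ p ∈ (Finset.range r) ×ˢ (Finset.range r),
        (mm (p.1+p.2) * mm ((r-1-p.1)+(r-1-p.2)) - mm (p.1+p.2+1) * mm ((r-1-p.1)+(r-1-p.2)+1)) := by
  have step2 : ∀ a : ℝ, (∑ p ∈ (Finset.range r) ×ˢ (Finset.range r),
        (a^((r-1-p.1)+(r-1-p.2)) * mm (p.1+p.2) - a^((r-1-p.1)+(r-1-p.2)+1) * mm (p.1+p.2+1)))
      / (Real.pi * Real.sqrt (1-a^2))
      = ∑ p ∈ (Finset.range r) ×ˢ (Finset.range r),
          (mm (p.1+p.2) * (a^((r-1-p.1)+(r-1-p.2)) / (Real.pi * w a))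
            - mm (p.1+p.2+1) * (a^((r-1-p.1)+(r-1-p.2)+1) / (Real.pi * w a))) := by
    intro a
    rw [show Real.sqrt (1-a^2) = w a from rfl, Finset.sum_div]
    apply Finset.sum_congr rfl
    intro p _
    ring
  calc _ = ∫ a in (-1:ℝ)..1, (∑ p ∈ (Finset.range r) ×ˢ (Finset.range r),
        (a^((r-1-p.1)+(r-1-p.2)) * mm (p.1+p.2) - a^((r-1-p.1)+(r-1-p.2)+1) * mm (p.1+p.2+1)))
      / (Real.pi * Real.sqrt (1-a^2)) := by
        apply intervalIntegral.integral_congr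
        intro a _
        exact inner_integral r a
    _ = ∫ a in (-1:ℝ)..1, ∑ p ∈ (Finset.range r) ×ˢ (Finset.range r),
          (mm (p.1+p.2) * (a^((r-1-p.1)+(r-1-p.2)) / (Real.pi * w a))
            - mm (p.1+p.2+1) * (a^((r-1-p.1)+(r-1-p.2)+1) / (Real.pi * w a))) := by
        apply intervalIntegral.integral_congr
        intro a _
        exact step2 a
    _ = _ := by
        rw [intervalIntegral.integral_finset_sum]
        · apply Finset.sum_congr rfl
          intro p _
          rw [intervalIntegral.integral_sub (((pow_div_w_integrable _).const_mul _))
            (((pow_div_w_integrable _).const_mul _)),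
            intervalIntegral.integral_const_mul, intervalIntegral.integral_const_mul]
          rfl
        · intro p _
          exact ((pow_div_w_integrable _).const_mul _).sub
            ((pow_div_w_integrable _).const_mul _)



lemma fiber_card (r s : ℕ) (hs : s < 2*r-1) (hpos : 0 < r) :
    ((Finset.range r ×ˢ Finset.range r).filter (fun p => p.1 + p.2 = s)).card
      = min (s+1) (2*r-1-s) := by
  rw [show min (s+1) (2*r-1-s) = (Finset.range (min (s+1) (2*r-1-s))).card by simp]
  apply Finset.card_bij (fun p _ => p.1 - (s+1-r))
  · intro p hp
    simp only [Finset.mem_filter, Finset.mem_product, Finset.mem_range] at hp ⊢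
    omega
  · intro p1 h1 p2 h2 heq
    simp only [Finset.mem_filter, Finset.mem_product, Finset.mem_range] at h1 h2
    have : p1.1 = p2.1 := by omega
    have : p1.2 = p2.2 := by omega
    exact Prod.ext ‹p1.1 = p2.1› ‹p1.2 = p2.2›
  · intro b hb
    simp only [Finset.mem_range] at hb
    refine ⟨(b + (s+1-r), s - (b + (s+1-r))), ?_, by omega⟩
    simp only [Finset.mem_filter, Finset.mem_product, Finset.mem_range]
    omega

lemma image_sum (r : ℕ) (hpos : 0 < r) :
    (Finset.range r ×ˢ Finset.range r).image (fun p : ℕ × ℕ => p.1 + p.2)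
      = Finset.range (2*r-1) := by
  ext s
  simp only [Finset.mem_image, Finset.mem_product, Finset.mem_range, Prod.exists]
  constructor
  · rintro ⟨a, b, ⟨ha, hb⟩, rfl⟩; omega
  · intro hs
    exact ⟨min s (r-1), s - min s (r-1), ⟨by omega, by omega⟩, by omega⟩

lemma parity_split (g : ℕ → ℝ) (n : ℕ) :
    ∑ s ∈ Finset.range (2*n), g s = ∑ i ∈ Finset.range n, (g (2*i) + g (2*i+1)) := by
  induction n with
  | zero => simp
  | succ m ih =>
    rw [show 2*(m+1) = 2*m+1+1 by ring, Finset.sum_range_succ, Finset.sum_range_succ,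
      Finset.sum_range_succ, ih]
    ring

theorem comb_bound (r : ℕ) (hr : Even r) (hpos : 0 < r) :
    ∑ p ∈ (Finset.range r) ×ˢ (Finset.range r),
        (mm (p.1+p.2) * mm ((r-1-p.1)+(r-1-p.2)) - mm (p.1+p.2+1) * mm ((r-1-p.1)+(r-1-p.2)+1))
      ≤ 2 * (r : ℝ) / 4 ^ (r - 1) * (Nat.choose (2 * r - 2) (r - 1) : ℝ) := by
  obtain ⟨t, rfl⟩ := hr
  set r := t + t with hrdef
  have ht : 1 ≤ t := by omega
  set F : ℕ → ℝ := fun s => mm s * mm (2*r-2-s) - mm (s+1) * mm (2*r-2-s+1) with hF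
  have step1 : ∑ p ∈ (Finset.range r) ×ˢ (Finset.range r),
        (mm (p.1+p.2) * mm ((r-1-p.1)+(r-1-p.2)) - mm (p.1+p.2+1) * mm ((r-1-p.1)+(r-1-p.2)+1))
      = ∑ p ∈ (Finset.range r) ×ˢ (Finset.range r), F (p.1+p.2) := by
    apply Finset.sum_congr rfl
    intro p hp
    simp only [Finset.mem_product, Finset.mem_range] at hp
    rw [hF]
    have e1 : (r-1-p.1)+(r-1-p.2) = 2*r-2-(p.1+p.2) := by omega
    rw [e1]
  rw [step1, Finset.sum_comp F (fun p : ℕ × ℕ => p.1 + p.2), image_sum r hpos]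
  have step2 : ∑ s ∈ Finset.range (2*r-1),
        ((Finset.range r ×ˢ Finset.range r).filter (fun p => p.1 + p.2 = s)).card • F s
      = ∑ s ∈ Finset.range (2*r-1), ((min (s+1) (2*r-1-s) : ℕ) : ℝ) * F s := by
    apply Finset.sum_congr rfl
    intro s hs
    rw [Finset.mem_range] at hs
    rw [fiber_card r s hs hpos, nsmul_eq_mul]
  rw [step2]
  -- split off last term and use parity
  have hsplit : (2*r-1) = 2*(r-1)+1 := by omega
  set g : ℕ → ℝ := fun s => ((min (s+1) (2*r-1-s) : ℕ) : ℝ) * F s with hg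
  rw [hsplit, Finset.sum_range_succ, parity_split g (r-1)]
  -- last term
  have hlast : ((min (2*(r-1)+1) (2*r-1-2*(r-1)) : ℕ) : ℝ) * F (2*(r-1)) = mu (r-1) := by
    have e1 : min (2*(r-1)+1) (2*r-1-2*(r-1)) = 1 := by omega
    rw [e1, hF]
    simp only
    rw [show 2*r-2-2*(r-1) = 2*0 by omega, mm_even 0, mm_even (r-1), mm_odd (r-1)]
    simp [mu_zero]
  rw [hlast]
  -- per-i bound
  set X := mu (r-1) with hX
  have hXnn : 0 ≤ X := mu_nonneg (r-1)
  have hper : ∀ i ∈ Finset.range (r-1), g (2*i) + g (2*i+1)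
      ≤ if i < t then 0 else 4*(t:ℝ)*X/(2*(t:ℝ)+2) := by
    intro i hi
    rw [Finset.mem_range] at hi
    have hrec := mu_rec i
    have hmm1 : mm (2*i) = mu i := mm_even i
    have hmm2 : mm (2*i+1) = 0 := mm_odd i
    have hmm3 : mm (2*r-2-2*i) = mu (r-1-i) := by
      rw [show 2*r-2-2*i = 2*(r-1-i) by omega]; exact mm_even (r-1-i)
    have hmm4 : mm (2*r-2-(2*i+1)+1) = mu (r-1-i) := by
      rw [show 2*r-2-(2*i+1)+1 = 2*(r-1-i) by omega]; exact mm_even (r-1-i)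
    have hmm5 : mm (2*i+1+1) = mu (i+1) := by
      rw [show 2*i+1+1 = 2*(i+1) by omega]; exact mm_even (i+1)
    have hgi : g (2*i) + g (2*i+1)
        = ((min (2*i+1) (2*r-1-2*i) : ℕ) : ℝ) * (mu i * mu (r-1-i))
          - ((min (2*i+1+1) (2*r-1-(2*i+1)) : ℕ) : ℝ) * (mu (i+1) * mu (r-1-i)) := by
      rw [hg, hF]
      simp only
      rw [hmm1, hmm2, hmm3, hmm4, hmm5]
      ring
    rw [hgi]
    by_cases hit : i < t
    · rw [if_pos hit]
      rw [show min (2*i+1) (2*r-1-2*i) = 2*i+1 by omega,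
        show min (2*i+1+1) (2*r-1-(2*i+1)) = 2*i+2 by omega]
      push_cast
      have h0 : (2*(i:ℝ)+1) * (mu i * mu (r-1-i)) - (2*(i:ℝ)+2) * (mu (i+1) * mu (r-1-i)) = 0 := by
        linear_combination (-(mu (r-1-i))) * hrec
      linarith
    · rw [if_neg hit]
      push_neg at hit
      rw [show min (2*i+1) (2*r-1-2*i) = 2*r-1-2*i by omega,
        show min (2*i+1+1) (2*r-1-(2*i+1)) = 2*r-2-2*i by omega]
      have c1 : ((2*r-1-2*i : ℕ) : ℝ) = 4*t-1-2*i := by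
        have h' : (2*r-1-2*i) + (2*i+1) = 4*t := by omega
        have := congrArg (fun n : ℕ => (n : ℝ)) h'
        push_cast at this
        linarith
      have c2 : ((2*r-2-2*i : ℕ) : ℝ) = 4*t-2-2*i := by
        have h' : (2*r-2-2*i) + (2*i+2) = 4*t := by omega
        have := congrArg (fun n : ℕ => (n : ℝ)) h'
        push_cast at this
        linarith
      rw [c1, c2]
      have hmul : mu i * mu (r-1-i) ≤ X := by
        have := mu_mul_le i (r-1-i)
        rwa [show i + (r-1-i) = r-1 by omega] at this
      have hpos2 : (0:ℝ) < 2*(i:ℝ)+2 := by positivity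
      have hpos3 : (0:ℝ) < 2*(t:ℝ)+2 := by positivity
      have key : ((4*(t:ℝ)-1-2*i) * (mu i * mu (r-1-i)) - (4*(t:ℝ)-2-2*i) * (mu (i+1) * mu (r-1-i)))
          * (2*(i:ℝ)+2) = 4*(t:ℝ) * (mu i * mu (r-1-i)) := by
        linear_combination (-((4*(t:ℝ)-2-2*(i:ℝ)) * mu (r-1-i))) * hrec
      have hL : (4*(t:ℝ)-1-2*i) * (mu i * mu (r-1-i)) - (4*(t:ℝ)-2-2*i) * (mu (i+1) * mu (r-1-i))
          = 4*(t:ℝ) * (mu i * mu (r-1-i)) / (2*(i:ℝ)+2) := by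
        rw [eq_div_iff hpos2.ne']
        exact key
      rw [hL]
      apply div_le_div₀ (by positivity)
      · apply mul_le_mul_of_nonneg_left hmul (by positivity)
      · exact hpos3
      · have : (t:ℝ) ≤ i := by exact_mod_cast hit
        linarith
  have hsum := Finset.sum_le_sum hper
  have hite : ∑ i ∈ Finset.range (r-1), (if i < t then (0:ℝ) else 4*(t:ℝ)*X/(2*(t:ℝ)+2))
      = ((t-1 : ℕ) : ℝ) * (4*(t:ℝ)*X/(2*(t:ℝ)+2)) := by
    rw [Finset.sum_ite, Finset.sum_const_zero, zero_add, Finset.sum_const, nsmul_eq_mul]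
    congr 2
    rw [show (Finset.range (r-1)).filter (fun i => ¬ i < t) = Finset.Ico t (r-1) by
      ext x; simp only [Finset.mem_filter, Finset.mem_range, Finset.mem_Ico, not_lt]; omega]
    rw [Nat.card_Ico]
    omega
  -- RHS equals 2r * X
  have hrhs : 2 * ((r:ℕ) : ℝ) / 4 ^ (r - 1) * (Nat.choose (2 * r - 2) (r - 1) : ℝ) = 2*(r:ℝ)*X := by
    rw [hX, mu, show 2*r-2 = 2*(r-1) by omega]
    ring
  rw [hrhs]
  have hcast : ((t-1 : ℕ) : ℝ) = (t:ℝ) - 1 := by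
    have : (1:ℕ) ≤ t := ht
    push_cast [Nat.cast_sub this]
    ring
  have hfrac : ((t:ℝ)-1) * (4*(t:ℝ)*X/(2*(t:ℝ)+2)) ≤ (4*(t:ℝ)-1)*X := by
    rw [mul_div_assoc', div_le_iff₀ (by positivity)]
    have ht' : (1:ℝ) ≤ (t:ℝ) := by exact_mod_cast ht
    have h0t : (0:ℝ) ≤ (t:ℝ) := by linarith
    nlinarith [hXnn, mul_nonneg hXnn h0t, mul_nonneg (mul_nonneg hXnn h0t) h0t]
  have hr2 : ((r:ℕ):ℝ) = 2*(t:ℝ) := by rw [hrdef]; push_cast; ring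
  calc ∑ i ∈ Finset.range (r-1), (g (2*i) + g (2*i+1)) + X
      ≤ ((t-1 : ℕ) : ℝ) * (4*(t:ℝ)*X/(2*(t:ℝ)+2)) + X := by rw [← hite]; linarith [hsum]
    _ ≤ (4*(t:ℝ)-1)*X + X := by rw [hcast]; linarith [hfrac]
    _ ≤ 2*(r:ℝ)*X := by rw [hr2]; linarith


/-- For `r` a positive even integer and `A, B` independent arcsine random variables on
`(−1,1)`: `E[(Σ_{i=0}^{r−1} A^{r−1−i}B^i)²(1−AB)] ≤ (2r/4^{r−1})·C(2r−2, r−1)`,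
stated as a bound on the corresponding double integral against the arcsine densities. -/
theorem stmt18 (r : ℕ) (hr : Even r) (hpos : 0 < r) :
    (∫ a in (-1 : ℝ)..1, ∫ b in (-1 : ℝ)..1,
        ((∑ i ∈ Finset.range r, a ^ (r - 1 - i) * b ^ i) ^ 2 * (1 - a * b)) /
            (Real.pi * Real.sqrt (1 - a ^ 2)) / (Real.pi * Real.sqrt (1 - b ^ 2)))
      ≤ 2 * (r : ℝ) / 4 ^ (r - 1) * (Nat.choose (2 * r - 2) (r - 1) : ℝ) := by
  rw [total_integral r]
  exact comb_bound r hr hpos
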